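/- Under conditions (A.1) and (A.3), the spectral radius of the transfer operator L_M acting on the Banach space F^k_b(X) of bounded d_θ-Lipschitz-type functions equals its spectral radius acting on the Banach space C_b(X) of bounded continuous functions. -/

import Mathlib

open Filter MeasureTheory Topology
open scoped ENNReal NNReal BigOperators

namespace TMS

variable {S : Type*}

/-- prepend a symbol to a one-sided sequence -/
def cons (a : S) (ω : ℕ → S) : ℕ → S
  | 0 => a
  | n + 1 => ω n

/-- the shift transformation -/
def shift (ω : ℕ → S) : ℕ → S := fun n => ω (n + 1)

/-- the (one-sided) topological Markov shift with transition matrix `A` -/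
def markovShift (A : S → S → Prop) : Set (ℕ → S) := {ω | ∀ n, A (ω n) (ω (n + 1))}

/-- the cylinder set of a word of length `n`, inside `X` -/
def cylW (X : Set (ℕ → S)) (n : ℕ) (w : Fin n → S) : Set (ℕ → S) :=
  {ω | ω ∈ X ∧ ∀ i : Fin n, ω i = w i}

/-- the cylinder set of a single symbol, inside `X` -/
def cyl1 (X : Set (ℕ → S)) (s : S) : Set (ℕ → S) := {ω | ω ∈ X ∧ ω 0 = s}

/-- Birkhoff sum `S_n φ` -/
noncomputable def birkhoff (φ : (ℕ → S) → ℝ) (n : ℕ) (ω : ℕ → S) : ℝ :=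
  ∑ i ∈ Finset.range n, φ (shift^[i] ω)

open Classical in
/-- the metric `d_θ` -/
noncomputable def dtheta (θ : ℝ) (ω υ : ℕ → S) : ℝ :=
  if ω = υ then 0 else θ ^ sInf {n | ω n ≠ υ n}

/-- supremum norm over `X` -/
noncomputable def supNorm (X : Set (ℕ → S)) (f : (ℕ → S) → ℝ) : ℝ :=
  sSup ((fun ω => |f ω|) '' X)

/-- `C` is a bound witnessing `[f]_k ≤ C`, i.e. `var_n f ≤ C θ^n` for all `n ≥ k`. -/
def LipBound (X : Set (ℕ → S)) (θ : ℝ) (k : ℕ) (f : (ℕ → S) → ℝ) (C : ℝ) : Prop :=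
  ∀ n, k ≤ n → ∀ ω, ω ∈ X → ∀ υ, υ ∈ X → (∀ i, i < n → ω i = υ i) →
    |f ω - f υ| ≤ C * θ ^ n

/-- the seminorm `[f]_k` -/
noncomputable def lipSemi (X : Set (ℕ → S)) (θ : ℝ) (k : ℕ) (f : (ℕ → S) → ℝ) : ℝ :=
  sInf {C | 0 ≤ C ∧ LipBound X θ k f C}

/-- the norm `‖f‖_k = ‖f‖_∞ + [f]_k` -/
noncomputable def normK (X : Set (ℕ → S)) (θ : ℝ) (k : ℕ) (f : (ℕ → S) → ℝ) : ℝ :=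
  supNorm X f + lipSemi X θ k f

/-- `φ` is summable: `Σ_{s : [s] ≠ ∅} exp (sup_{[s]} φ) < ∞` -/
def SummableOn (X : Set (ℕ → S)) (φ : (ℕ → S) → ℝ) : Prop :=
  (∀ s : S, BddAbove (φ '' cyl1 X s)) ∧
    Summable (fun s : {s : S // (cyl1 X s).Nonempty} => Real.exp (sSup (φ '' cyl1 X s.1)))

/-- finite irreducibility of a transition matrix -/
def FinitelyIrreducible (A : S → S → Prop) : Prop :=
  ∃ F : Finset (List S), ∀ a b : S, ∃ w ∈ F, List.Chain' A (a :: (w ++ [b]))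

/-- `X` contains a periodic point of the shift -/
def HasPeriodicPoint (X : Set (ℕ → S)) : Prop :=
  ∃ ω, ω ∈ X ∧ ∃ m, 0 < m ∧ shift^[m] ω = ω

/-- the Ruelle transfer operator `L_M` associated to `M` and the potential `φ` -/
noncomputable def transfer (M : S → S → Prop) (φ : (ℕ → S) → ℝ)
    (f : (ℕ → S) → ℝ) : (ℕ → S) → ℝ :=
  fun ω => ∑' a : {a : S // M a (ω 0)}, Real.exp (φ (cons a ω)) * f (cons a ω)

section Top

variable [TopologicalSpace S]

/-- the cone `Λ^k_c` -/
def cone (X : Set (ℕ → S)) (θ : ℝ) (k : ℕ) (c : ℝ) : Set ((ℕ → S) → ℝ) :=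
  {f | ContinuousOn f X ∧ (∀ ω ∈ X, 0 ≤ f ω) ∧
    ∀ ω ∈ X, ∀ υ ∈ X, (∀ i, i < k → ω i = υ i) →
      f ω ≤ Real.exp (c * dtheta θ ω υ) * f υ}

/-- the space `C_b(X)` of bounded continuous functions -/
def Cb (X : Set (ℕ → S)) : Set ((ℕ → S) → ℝ) :=
  {f | ContinuousOn f X ∧ BddAbove ((fun ω => |f ω|) '' X)}

/-- the space `F^k_b(X)` of bounded weak-Lipschitz functions -/
def Fkb (X : Set (ℕ → S)) (θ : ℝ) (k : ℕ) : Set ((ℕ → S) → ℝ) :=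
  {f | f ∈ Cb X ∧ ∃ C, LipBound X θ k f C}

end Top

/-- operator norm of `L` on the space `F` with norm `N` -/
noncomputable def opNorm (N : ((ℕ → S) → ℝ) → ℝ) (F : Set ((ℕ → S) → ℝ))
    (L : ((ℕ → S) → ℝ) → (ℕ → S) → ℝ) : ℝ :=
  sSup {r | ∃ f ∈ F, N f ≤ 1 ∧ r = N (L f)}

/-- spectral radius of `L` on `(F, N)` via the Gelfand formula -/
noncomputable def specRad (N : ((ℕ → S) → ℝ) → ℝ) (F : Set ((ℕ → S) → ℝ))
    (L : ((ℕ → S) → ℝ) → (ℕ → S) → ℝ) : ℝ :=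
  Filter.limsup (fun n : ℕ => (opNorm N F (L^[n])) ^ ((1 : ℝ) / n)) Filter.atTop

/-- the `n`-th partition function `Σ_{w ∈ Sⁿ, [w] ≠ ∅} exp (sup_{[w]} S_n φ)` -/
noncomputable def partition (X : Set (ℕ → S)) (φ : (ℕ → S) → ℝ) (n : ℕ) : ℝ≥0∞ :=
  ∑' w : {w : Fin n → S // (cylW X n w).Nonempty},
    ENNReal.ofReal (Real.exp (sSup (birkhoff φ n '' cylW X n w.1)))

/-- `P` is the topological pressure of `φ` on `X` -/
def IsPressure (X : Set (ℕ → S)) (φ : (ℕ → S) → ℝ) (P : ℝ) : Prop :=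
  Filter.Tendsto (fun n : ℕ => Real.log (partition X φ n).toReal / (n : ℝ))
    Filter.atTop (nhds P)

/-- there is an `M`-path from `a` to `b` (of length at least one) -/
def reaches (M : S → S → Prop) (a b : S) : Prop :=
  ∃ l : List S, List.Chain M a (l ++ [b])

/-- communication relation `a ↔ b` -/
def comm (M : S → S → Prop) (a b : S) : Prop :=
  a = b ∨ (reaches M a b ∧ reaches M b a)

/-- the submatrix of `M` indexed by `T` -/
def restrictM (M : S → S → Prop) (T : Set S) : S → S → Prop :=
  fun a b => M a b ∧ a ∈ T ∧ b ∈ T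

/-- support of a Borel measure -/
def msupport [TopologicalSpace S] [MeasurableSpace S] (ν : Measure (ℕ → S)) :
    Set (ℕ → S) :=
  {ω | ∀ U : Set (ℕ → S), IsOpen U → ω ∈ U → 0 < ν U}

end TMS
section Stmt4Aux

open TMS

variable {S : Type*} {A M : S → S → Prop} {φ : (ℕ → S) → ℝ}

lemma cons_zero (a : S) (ω : ℕ → S) : TMS.cons a ω 0 = a := rfl
lemma cons_succ (a : S) (ω : ℕ → S) (n : ℕ) : TMS.cons a ω (n+1) = ω n := rfl

lemma cons_mem (hMA : ∀ a b, M a b → A a b) {ω : ℕ → S} {a : S}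
    (hω : ω ∈ TMS.markovShift A) (ha : M a (ω 0)) :
    TMS.cons a ω ∈ TMS.markovShift A := by
  intro n
  cases n with
  | zero => exact hMA _ _ ha
  | succ n => exact hω n

lemma cons_agree {ω υ : ℕ → S} {m : ℕ} (h : ∀ i, i < m → ω i = υ i) (a : S) :
    ∀ i, i < m + 1 → TMS.cons a ω i = TMS.cons a υ i := by
  intro i hi
  cases i with
  | zero => rfl
  | succ i => exact h i (by omega)

/-- the constant `T = Σ_s exp (sup_{[s]} φ)` -/
noncomputable def Tc (A : S → S → Prop) (φ : (ℕ → S) → ℝ) : ℝ :=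
  ∑' s : {s : S // (TMS.cyl1 (TMS.markovShift A) s).Nonempty},
    Real.exp (sSup (φ '' TMS.cyl1 (TMS.markovShift A) s.1))

lemma Tc_nonneg : 0 ≤ Tc A φ := tsum_nonneg (fun s => (Real.exp_pos _).le)

lemma summable_W (hMA : ∀ a b, M a b → A a b) (hφ : TMS.SummableOn (TMS.markovShift A) φ)
    {ω : ℕ → S} {s : S} (hω : ω ∈ TMS.markovShift A) (hs : ω 0 = s) :
    Summable (fun a : {a : S // M a s} => Real.exp (φ (TMS.cons a.1 ω))) ∧
      ∑' a : {a : S // M a s}, Real.exp (φ (TMS.cons a.1 ω)) ≤ Tc A φ := by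
  subst hs
  have hmem : ∀ a : {a : S // M a (ω 0)}, TMS.cons a.1 ω ∈ TMS.markovShift A :=
    fun a => cons_mem hMA hω a.2
  set X := TMS.markovShift A
  let e : {a : S // M a (ω 0)} → {s : S // (TMS.cyl1 X s).Nonempty} :=
    fun a => ⟨a.1, ⟨TMS.cons a.1 ω, hmem a, rfl⟩⟩
  have he : Function.Injective e := by
    intro a b h
    have h2 := congrArg (fun x : {s : S // (TMS.cyl1 X s).Nonempty} => x.1) h
    exact Subtype.ext h2
  have hle : ∀ a, Real.exp (φ (TMS.cons a.1 ω)) ≤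
      Real.exp (sSup (φ '' TMS.cyl1 X (e a).1)) := by
    intro a
    exact Real.exp_le_exp.2 (le_csSup (hφ.1 a.1) ⟨_, ⟨hmem a, rfl⟩, rfl⟩)
  have hsum : Summable (fun a => Real.exp (sSup (φ '' TMS.cyl1 X (e a).1))) :=
    hφ.2.comp_injective he
  have hW : Summable (fun a : {a : S // M a (ω 0)} => Real.exp (φ (TMS.cons a.1 ω))) :=
    Summable.of_nonneg_of_le (fun a => (Real.exp_pos _).le) hle hsum
  exact ⟨hW, Summable.tsum_le_tsum_of_inj e he (fun c _ => (Real.exp_pos _).le) hle hW hφ.2⟩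

end Stmt4Aux
section Stmt4Aux2
set_option maxHeartbeats 800000


open TMS

variable {S : Type*} {A M : S → S → Prop} {φ : (ℕ → S) → ℝ}


lemma abs_tsum_le {ι : Type*} {f : ι → ℝ} (h : Summable (fun i => |f i|)) :
    |∑' i, f i| ≤ ∑' i, |f i| := by
  have h3 : Summable (fun i => ‖f i‖) := by simpa [Real.norm_eq_abs] using h
  have h4 := norm_tsum_le_tsum_norm h3
  simpa [Real.norm_eq_abs] using h4

lemma transfer_apply {h : (ℕ → S) → ℝ} {ω : ℕ → S} {s : S} (hs : ω 0 = s) :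
    TMS.transfer M φ h ω =
      ∑' a : {a : S // M a s}, Real.exp (φ (TMS.cons a.1 ω)) * h (TMS.cons a.1 ω) := by
  subst hs; rfl

lemma summable_term (hMA : ∀ a b, M a b → A a b) (hφ : TMS.SummableOn (TMS.markovShift A) φ)
    {h : (ℕ → S) → ℝ} {c : ℝ} {ω : ℕ → S} {s : S}
    (hω : ω ∈ TMS.markovShift A) (hs : ω 0 = s)
    (hb : ∀ υ ∈ TMS.markovShift A, |h υ| ≤ c) :
    Summable (fun a : {a : S // M a s} =>
      Real.exp (φ (TMS.cons a.1 ω)) * h (TMS.cons a.1 ω)) := by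
  subst hs
  have hW := (summable_W hMA hφ hω rfl).1
  apply Summable.of_norm
  apply Summable.of_nonneg_of_le (fun a => norm_nonneg _) (fun a => ?_) (hW.mul_right c)
  have hmem := cons_mem hMA hω a.2
  have h1 : |Real.exp (φ (TMS.cons a.1 ω)) * h (TMS.cons a.1 ω)| =
      Real.exp (φ (TMS.cons a.1 ω)) * |h (TMS.cons a.1 ω)| := by
    rw [abs_mul, abs_of_pos (Real.exp_pos _)]
  rw [Real.norm_eq_abs, h1]
  exact mul_le_mul_of_nonneg_left (hb _ hmem) (Real.exp_pos _).le

lemma transfer_abs_le (hMA : ∀ a b, M a b → A a b) (hφ : TMS.SummableOn (TMS.markovShift A) φ)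
    {h : (ℕ → S) → ℝ} {c : ℝ} {ω : ℕ → S}
    (hω : ω ∈ TMS.markovShift A) (hc : 0 ≤ c)
    (hb : ∀ υ ∈ TMS.markovShift A, |h υ| ≤ c) :
    |TMS.transfer M φ h ω| ≤ c * Tc A φ := by
  rw [transfer_apply rfl]
  have hs := summable_term hMA hφ hω rfl hb
  have hW := summable_W hMA hφ hω rfl
  calc |∑' a : {a : S // M a (ω 0)}, Real.exp (φ (TMS.cons a.1 ω)) * h (TMS.cons a.1 ω)|
      ≤ ∑' a : {a : S // M a (ω 0)}, |Real.exp (φ (TMS.cons a.1 ω)) * h (TMS.cons a.1 ω)| := by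
        exact abs_tsum_le (summable_abs_iff.mpr hs)
    _ ≤ ∑' a : {a : S // M a (ω 0)}, c * Real.exp (φ (TMS.cons a.1 ω)) := by
        apply Summable.tsum_le_tsum _ (summable_abs_iff.mpr hs) (hW.1.mul_left c)
        intro a
        have hmem := cons_mem hMA hω a.2
        rw [abs_mul, abs_of_pos (Real.exp_pos _), mul_comm c]
        exact mul_le_mul_of_nonneg_left (hb _ hmem) (Real.exp_pos _).le
    _ = c * ∑' a : {a : S // M a (ω 0)}, Real.exp (φ (TMS.cons a.1 ω)) := tsum_mul_left
    _ ≤ c * Tc A φ := mul_le_mul_of_nonneg_left hW.2 hc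

lemma transfer_smul (c : ℝ) (h : (ℕ → S) → ℝ) :
    TMS.transfer M φ (fun x => c * h x) = fun ω => c * TMS.transfer M φ h ω := by
  funext ω
  rw [TMS.transfer, TMS.transfer, ← tsum_mul_left]
  congr 1
  funext a
  ring

lemma iter_smul (n : ℕ) (c : ℝ) (h : (ℕ → S) → ℝ) :
    (TMS.transfer M φ)^[n] (fun x => c * h x) = fun ω => c * (TMS.transfer M φ)^[n] h ω := by
  induction n with
  | zero => rfl
  | succ n ih =>
      rw [Function.iterate_succ_apply', Function.iterate_succ_apply', ih]
      exact transfer_smul c _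

lemma iter_bound (hMA : ∀ a b, M a b → A a b) (hφ : TMS.SummableOn (TMS.markovShift A) φ) :
    ∀ (n : ℕ) (f g : (ℕ → S) → ℝ) (c : ℝ), 0 ≤ c →
      (∀ ω ∈ TMS.markovShift A, |f ω| ≤ g ω) →
      (∀ ω ∈ TMS.markovShift A, |g ω| ≤ c) →
      ∀ ω ∈ TMS.markovShift A,
        |(TMS.transfer M φ)^[n] f ω| ≤ (TMS.transfer M φ)^[n] g ω ∧
          |(TMS.transfer M φ)^[n] g ω| ≤ c * (Tc A φ) ^ n := by
  intro n
  induction n with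
  | zero =>
      intro f g c hc hfg hg ω hω
      simpa using ⟨hfg ω hω, hg ω hω⟩
  | succ n ih =>
      intro f g c hc hfg hg ω hω
      have hfc : ∀ υ ∈ TMS.markovShift A, |f υ| ≤ c := by
        intro υ hυ
        exact le_trans (hfg υ hυ) (le_trans (le_abs_self _) (hg υ hυ))
      have h1 : ∀ υ ∈ TMS.markovShift A,
          |TMS.transfer M φ f υ| ≤ TMS.transfer M φ g υ := by
        intro υ hυ
        rw [transfer_apply rfl, transfer_apply rfl]
        have hsf := summable_term hMA hφ hυ rfl hfc
        have hsg := summable_term hMA hφ hυ rfl hg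
        calc |∑' a : {a : S // M a (υ 0)}, Real.exp (φ (TMS.cons a.1 υ)) * f (TMS.cons a.1 υ)|
            ≤ ∑' a : {a : S // M a (υ 0)},
                |Real.exp (φ (TMS.cons a.1 υ)) * f (TMS.cons a.1 υ)| := by
              exact abs_tsum_le (summable_abs_iff.mpr hsf)
          _ ≤ ∑' a : {a : S // M a (υ 0)},
                Real.exp (φ (TMS.cons a.1 υ)) * g (TMS.cons a.1 υ) := by
              apply Summable.tsum_le_tsum _ (summable_abs_iff.mpr hsf) hsg
              intro a
              have hmem := cons_mem hMA hυ a.2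
              rw [abs_mul, abs_of_pos (Real.exp_pos _)]
              exact mul_le_mul_of_nonneg_left (hfg _ hmem) (Real.exp_pos _).le
      have h2 : ∀ υ ∈ TMS.markovShift A,
          |TMS.transfer M φ g υ| ≤ c * Tc A φ :=
        fun υ hυ => transfer_abs_le hMA hφ hυ hc hg
      have := ih (TMS.transfer M φ f) (TMS.transfer M φ g) (c * Tc A φ)
        (mul_nonneg hc Tc_nonneg) h1 h2 ω hω
      rw [← Function.iterate_succ_apply, ← Function.iterate_succ_apply] at this
      refine ⟨this.1, le_trans this.2 (le_of_eq ?_)⟩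
      ring

end Stmt4Aux2
section Stmt4Aux3

set_option maxHeartbeats 1000000

open TMS

variable {S : Type*} {A M : S → S → Prop} {φ : (ℕ → S) → ℝ}

lemma iter_one_bound (hMA : ∀ a b, M a b → A a b)
    (hφ : TMS.SummableOn (TMS.markovShift A) φ) (n : ℕ) {ω : ℕ → S}
    (hω : ω ∈ TMS.markovShift A) :
    0 ≤ (TMS.transfer M φ)^[n] (fun _ => (1:ℝ)) ω ∧
      |(TMS.transfer M φ)^[n] (fun _ => (1:ℝ)) ω| ≤ (Tc A φ) ^ n := by
  have h := iter_bound hMA hφ n (fun _ => (1:ℝ)) (fun _ => (1:ℝ)) 1 one_pos.le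
    (by intro υ _; simp) (by intro υ _; simp) ω hω
  refine ⟨le_trans (abs_nonneg _) h.1, ?_⟩
  simpa using h.2

lemma iter_dom (hMA : ∀ a b, M a b → A a b)
    (hφ : TMS.SummableOn (TMS.markovShift A) φ) (n : ℕ) {f : (ℕ → S) → ℝ} {c : ℝ}
    (hc : 0 ≤ c) (hb : ∀ ω ∈ TMS.markovShift A, |f ω| ≤ c) {ω : ℕ → S}
    (hω : ω ∈ TMS.markovShift A) :
    |(TMS.transfer M φ)^[n] f ω| ≤ c * (TMS.transfer M φ)^[n] (fun _ => (1:ℝ)) ω := by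
  have h := (iter_bound hMA hφ n f (fun _ => c) c hc hb
    (by intro υ _; rw [abs_of_nonneg hc]) ω hω).1
  have he : (fun _ : ℕ → S => c) = (fun x => c * (fun _ : ℕ → S => (1:ℝ)) x) := by
    funext x; ring
  rw [he, iter_smul] at h
  exact h

lemma iter_abs_bound (hMA : ∀ a b, M a b → A a b)
    (hφ : TMS.SummableOn (TMS.markovShift A) φ) (n : ℕ) {f : (ℕ → S) → ℝ} {c : ℝ}
    (hc : 0 ≤ c) (hb : ∀ ω ∈ TMS.markovShift A, |f ω| ≤ c) {ω : ℕ → S}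
    (hω : ω ∈ TMS.markovShift A) :
    |(TMS.transfer M φ)^[n] f ω| ≤ c * (Tc A φ) ^ n := by
  refine le_trans (iter_dom hMA hφ n hc hb hω) ?_
  have h := (iter_one_bound hMA hφ n hω)
  exact mul_le_mul_of_nonneg_left (le_trans (le_abs_self _) h.2) hc

/-- accumulated distortion constant -/
noncomputable def Dc (θ B : ℝ) (m n : ℕ) : ℝ :=
  Real.exp (B * ∑ j ∈ Finset.range n, θ ^ (m + 1 + j))

lemma Dc_zero {θ B : ℝ} {m : ℕ} : Dc θ B m 0 = 1 := by simp [Dc]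

lemma Dc_succ {θ B : ℝ} {m n : ℕ} :
    Dc θ B m (n + 1) = Real.exp (B * θ ^ (m + 1)) * Dc θ B (m + 1) n := by
  rw [Dc, Dc, ← Real.exp_add]
  congr 1
  rw [Finset.sum_range_succ']
  have he : ∑ j ∈ Finset.range n, θ ^ (m + 1 + (j + 1))
      = ∑ j ∈ Finset.range n, θ ^ (m + 1 + 1 + j) :=
    Finset.sum_congr rfl fun j _ => by rw [show m + 1 + (j + 1) = m + 1 + 1 + j from by omega]
  rw [he]
  ring

lemma Dc_one_le {θ B : ℝ} {m n : ℕ} (hB : 0 ≤ B) (hθ : 0 ≤ θ) : 1 ≤ Dc θ B m n := by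
  rw [Dc]
  apply Real.one_le_exp
  exact mul_nonneg hB (Finset.sum_nonneg fun j _ => pow_nonneg hθ _)

lemma geom_aux {θ : ℝ} (hθ0 : 0 < θ) (hθ1 : θ < 1) (m n : ℕ) :
    ∑ j ∈ Finset.range n, θ ^ (m + 1 + j) ≤ θ ^ (m + 1) / (1 - θ) := by
  have h1 : ∑ j ∈ Finset.range n, θ ^ (m + 1 + j)
      = θ ^ (m + 1) * ∑ j ∈ Finset.range n, θ ^ j := by
    rw [Finset.mul_sum]
    exact Finset.sum_congr rfl fun j _ => by rw [pow_add]
  have h2 : ∑ j ∈ Finset.range n, θ ^ j = (1 - θ ^ n) / (1 - θ) := by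
    rw [geom_sum_eq (ne_of_lt hθ1)]
    rw [← neg_sub (1:ℝ) θ, ← neg_sub (1:ℝ) (θ ^ n), neg_div_neg_eq]
  have hpos : 0 < 1 - θ := by linarith
  rw [h1, h2]
  rw [div_eq_mul_inv, div_eq_mul_inv, ← mul_assoc]
  apply mul_le_mul_of_nonneg_right _ (inv_nonneg.2 hpos.le)
  have hpn : 0 ≤ θ ^ n := pow_nonneg hθ0.le n
  nlinarith [pow_nonneg hθ0.le (m+1)]

lemma exp_sub_one_le {x : ℝ} (hx : 0 ≤ x) : Real.exp x - 1 ≤ x * Real.exp x := by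
  have h1 := Real.add_one_le_exp (-x)
  have h2 : Real.exp (-x) * Real.exp x = 1 := by rw [← Real.exp_add]; simp
  nlinarith [Real.exp_pos x]

lemma exp_diff_le {u v d : ℝ} (hd : |u - v| ≤ d) :
    |Real.exp u - Real.exp v| ≤ Real.exp v * (Real.exp d - 1) := by
  have hd0 : 0 ≤ d := le_trans (abs_nonneg _) hd
  have habs := abs_le.mp hd
  rcases le_total u v with h | h
  · rw [abs_of_nonpos (sub_nonpos.2 (Real.exp_le_exp.2 h))]
    have he : Real.exp u = Real.exp v * Real.exp (u - v) := by
      rw [← Real.exp_add]; ring_nf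
    rw [he]
    have h2 : Real.exp (-d) ≤ Real.exp (u - v) := Real.exp_le_exp.2 (by linarith [habs.1])
    have h3 : Real.exp (-d) * Real.exp d = 1 := by rw [← Real.exp_add]; simp
    have h4 : 2 ≤ Real.exp d + Real.exp (-d) := by nlinarith [Real.exp_pos d, sq_nonneg (Real.exp d - 1)]
    nlinarith [Real.exp_pos v]
  · rw [abs_of_nonneg (sub_nonneg.2 (Real.exp_le_exp.2 h))]
    have he : Real.exp u = Real.exp v * Real.exp (u - v) := by
      rw [← Real.exp_add]; ring_nf
    rw [he]
    have h2 : Real.exp (u - v) ≤ Real.exp d := Real.exp_le_exp.2 habs.2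
    nlinarith [Real.exp_pos v]

lemma Dc_le {θ B : ℝ} {m n : ℕ} (hB : 0 ≤ B) (hθ0 : 0 < θ) (hθ1 : θ < 1) :
    Dc θ B m n ≤ Real.exp (B * (θ / (1 - θ))) := by
  rw [Dc]
  apply Real.exp_le_exp.2
  apply mul_le_mul_of_nonneg_left _ hB
  refine le_trans (geom_aux hθ0 hθ1 m n) ?_
  have hpos : 0 < 1 - θ := by linarith
  have hp : θ ^ (m + 1) ≤ θ := by
    simpa using pow_le_pow_of_le_one hθ0.le hθ1.le (show 1 ≤ m + 1 by omega)
  gcongr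

lemma Dc_sub_one_le {θ B : ℝ} {m n : ℕ} (hB : 0 ≤ B) (hθ0 : 0 < θ) (hθ1 : θ < 1) :
    Dc θ B m n - 1 ≤
      θ ^ m * (B * θ / (1 - θ) * Real.exp (B * (θ / (1 - θ)))) := by
  have hpos : 0 < 1 - θ := by linarith
  set σ := ∑ j ∈ Finset.range n, θ ^ (m + 1 + j) with hσ
  have hσ0 : 0 ≤ σ := Finset.sum_nonneg fun j _ => pow_nonneg hθ0.le _
  have hσle : σ ≤ θ ^ (m + 1) / (1 - θ) := geom_aux hθ0 hθ1 m n
  have hx0 : 0 ≤ B * σ := mul_nonneg hB hσ0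
  have h1 : Dc θ B m n - 1 ≤ (B * σ) * Dc θ B m n := by
    rw [Dc]
    exact exp_sub_one_le hx0
  have h2 : Dc θ B m n ≤ Real.exp (B * (θ / (1 - θ))) := Dc_le hB hθ0 hθ1
  have h3 : B * σ ≤ B * (θ ^ (m + 1) / (1 - θ)) :=
    mul_le_mul_of_nonneg_left hσle hB
  have h4 : B * (θ ^ (m + 1) / (1 - θ)) = θ ^ m * (B * θ / (1 - θ)) := by
    rw [pow_succ]
    field_simp
  have hE0 : (0:ℝ) < Real.exp (B * (θ / (1 - θ))) := Real.exp_pos _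
  calc Dc θ B m n - 1 ≤ (B * σ) * Dc θ B m n := h1
    _ ≤ (θ ^ m * (B * θ / (1 - θ))) * Real.exp (B * (θ / (1 - θ))) := by
        apply mul_le_mul (by rw [← h4]; exact h3) h2 ?_ ?_
        · exact le_trans (by norm_num) (Dc_one_le hB hθ0.le)
        · positivity
    _ = θ ^ m * (B * θ / (1 - θ) * Real.exp (B * (θ / (1 - θ)))) := by ring

end Stmt4Aux3
section Stmt4Aux4

set_option maxHeartbeats 1000000

open TMS

variable {S : Type*} {A M : S → S → Prop} {φ : (ℕ → S) → ℝ}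

lemma core (hMA : ∀ a b, M a b → A a b)
    (hφ : TMS.SummableOn (TMS.markovShift A) φ) {θ B : ℝ} {k : ℕ}
    (hθ0 : 0 < θ) (hθ1 : θ < 1) (hk : 1 ≤ k)
    (hB : TMS.LipBound (TMS.markovShift A) θ (k + 1) φ B) (hB0 : 0 ≤ B) :
    ∀ (n : ℕ) (f : (ℕ → S) → ℝ) (Kf c : ℝ), 0 ≤ Kf → 0 ≤ c →
      TMS.LipBound (TMS.markovShift A) θ k f Kf →
      (∀ ω ∈ TMS.markovShift A, |f ω| ≤ c) →
      ∀ m, k ≤ m → ∀ ω ∈ TMS.markovShift A, ∀ υ ∈ TMS.markovShift A,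
        (∀ i, i < m → ω i = υ i) →
      |(TMS.transfer M φ)^[n] f ω - (TMS.transfer M φ)^[n] f υ| ≤
        (Kf * θ ^ (m + n) * Dc θ B m n + c * (Dc θ B m n - 1)) *
          (TMS.transfer M φ)^[n] (fun _ => (1:ℝ)) υ := by
  intro n
  induction n with
  | zero =>
      intro f Kf c hKf hc hfK hfb m hm ω hω υ hυ hag
      simp only [Function.iterate_zero, id_eq, Dc_zero, Nat.add_zero]
      have := hfK m hm ω hω υ hυ hag
      calc |f ω - f υ| ≤ Kf * θ ^ m := this
        _ = (Kf * θ ^ m * 1 + c * (1 - 1)) * 1 := by ring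
  | succ n ih =>
      intro f Kf c hKf hc hfK hfb m hm ω hω υ hυ hag
      have h0 : υ 0 = ω 0 := (hag 0 (by omega)).symm
      -- bound on g := L^[n] f
      have hgb : ∀ ρ ∈ TMS.markovShift A,
          |(TMS.transfer M φ)^[n] f ρ| ≤ c * (Tc A φ) ^ n :=
        fun ρ hρ => iter_abs_bound hMA hφ n hc hfb hρ
      have hL1b : ∀ ρ ∈ TMS.markovShift A,
          |(TMS.transfer M φ)^[n] (fun _ => (1:ℝ)) ρ| ≤ (Tc A φ) ^ n :=
        fun ρ hρ => (iter_one_bound hMA hφ n hρ).2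
      -- summabilities
      have hsx : Summable (fun a : {a : S // M a (ω 0)} =>
          Real.exp (φ (TMS.cons a.1 ω)) * (TMS.transfer M φ)^[n] f (TMS.cons a.1 ω)) :=
        summable_term hMA hφ hω rfl hgb
      have hsy : Summable (fun a : {a : S // M a (ω 0)} =>
          Real.exp (φ (TMS.cons a.1 υ)) * (TMS.transfer M φ)^[n] f (TMS.cons a.1 υ)) :=
        summable_term hMA hφ hυ h0 hgb
      have hsL1 : Summable (fun a : {a : S // M a (ω 0)} =>
          Real.exp (φ (TMS.cons a.1 υ)) *
            (TMS.transfer M φ)^[n] (fun _ => (1:ℝ)) (TMS.cons a.1 υ)) :=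
        summable_term hMA hφ hυ h0 hL1b
      set key := Kf * θ ^ (m + (n + 1)) * Dc θ B m (n + 1) +
        c * (Dc θ B m (n + 1) - 1) with hkey
      -- pointwise estimate
      have hpt : ∀ a : {a : S // M a (ω 0)},
          |Real.exp (φ (TMS.cons a.1 ω)) * (TMS.transfer M φ)^[n] f (TMS.cons a.1 ω)
            - Real.exp (φ (TMS.cons a.1 υ)) * (TMS.transfer M φ)^[n] f (TMS.cons a.1 υ)|
          ≤ key * (Real.exp (φ (TMS.cons a.1 υ)) *
              (TMS.transfer M φ)^[n] (fun _ => (1:ℝ)) (TMS.cons a.1 υ)) := by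
        intro a
        have hp : TMS.cons a.1 ω ∈ TMS.markovShift A := cons_mem hMA hω a.2
        have hq : TMS.cons a.1 υ ∈ TMS.markovShift A := by
          refine cons_mem hMA hυ ?_
          rw [h0]; exact a.2
        have hag' : ∀ i, i < m + 1 → TMS.cons a.1 ω i = TMS.cons a.1 υ i :=
          cons_agree hag a.1
        have hφd : |φ (TMS.cons a.1 ω) - φ (TMS.cons a.1 υ)| ≤ B * θ ^ (m + 1) :=
          hB (m + 1) (by omega) _ hp _ hq hag'
        set w1 := Real.exp (φ (TMS.cons a.1 ω)) with hw1
        set w2 := Real.exp (φ (TMS.cons a.1 υ)) with hw2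
        set e1 := Real.exp (B * θ ^ (m + 1)) with he1
        have hw2pos : 0 < w2 := Real.exp_pos _
        have hw1pos : 0 < w1 := Real.exp_pos _
        have he1one : 1 ≤ e1 := Real.one_le_exp (by positivity)
        have hWle : w1 ≤ e1 * w2 := by
          rw [hw1, hw2, he1, ← Real.exp_add]
          apply Real.exp_le_exp.2
          have := (abs_le.mp hφd).2
          linarith
        have hWdiff : |w1 - w2| ≤ w2 * (e1 - 1) := exp_diff_le hφd
        set gp := (TMS.transfer M φ)^[n] f (TMS.cons a.1 ω) with hgp
        set gq := (TMS.transfer M φ)^[n] f (TMS.cons a.1 υ) with hgq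
        set G := (TMS.transfer M φ)^[n] (fun _ => (1:ℝ)) (TMS.cons a.1 υ) with hG
        set D' := Dc θ B (m + 1) n with hD'
        have hD'1 : 1 ≤ D' := Dc_one_le hB0 hθ0.le
        have hGpos : 0 ≤ G := (iter_one_bound hMA hφ n hq).1
        have hIH : |gp - gq| ≤ (Kf * θ ^ (m + 1 + n) * D' + c * (D' - 1)) * G :=
          ih f Kf c hKf hc hfK hfb (m + 1) (by omega) _ hp _ hq hag'
        have hgqb : |gq| ≤ c * G := iter_dom hMA hφ n hc hfb hq
        have hcoef0 : 0 ≤ Kf * θ ^ (m + 1 + n) * D' + c * (D' - 1) := by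
          have hp0 : 0 ≤ θ ^ (m + 1 + n) := pow_nonneg hθ0.le _
          have hD0 : (0:ℝ) ≤ D' := le_trans zero_le_one hD'1
          have h1 : 0 ≤ Kf * θ ^ (m + 1 + n) * D' :=
            mul_nonneg (mul_nonneg hKf hp0) hD0
          have h2 : 0 ≤ c * (D' - 1) := mul_nonneg hc (by linarith)
          linarith
        calc |w1 * gp - w2 * gq|
            = |w1 * (gp - gq) + (w1 - w2) * gq| := by congr 1; ring
          _ ≤ |w1 * (gp - gq)| + |(w1 - w2) * gq| := abs_add_le _ _
          _ = w1 * |gp - gq| + |w1 - w2| * |gq| := by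
              rw [abs_mul, abs_mul, abs_of_pos hw1pos]
          _ ≤ (e1 * w2) * ((Kf * θ ^ (m + 1 + n) * D' + c * (D' - 1)) * G)
              + (w2 * (e1 - 1)) * (c * G) := by
              apply add_le_add
              · apply mul_le_mul hWle hIH (abs_nonneg _)
                exact mul_nonneg (le_trans zero_le_one he1one) hw2pos.le
              · apply mul_le_mul hWdiff hgqb (abs_nonneg _)
                exact mul_nonneg hw2pos.le (by linarith)
          _ = key * (w2 * G) := by
              rw [hkey, Dc_succ, ← hD', ← he1,
                show m + (n + 1) = m + 1 + n from by omega]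
              ring
      -- assemble
      rw [Function.iterate_succ_apply',
        transfer_apply (rfl : ω 0 = ω 0), transfer_apply h0]
      have hR : (TMS.transfer M φ)^[n + 1] (fun _ => (1:ℝ)) υ =
          ∑' a : {a : S // M a (ω 0)},
            Real.exp (φ (TMS.cons a.1 υ)) *
              (TMS.transfer M φ)^[n] (fun _ => (1:ℝ)) (TMS.cons a.1 υ) := by
        rw [Function.iterate_succ_apply']
        exact transfer_apply h0
      rw [hR]
      have hsz : Summable (fun a : {a : S // M a (ω 0)} =>
          key * (Real.exp (φ (TMS.cons a.1 υ)) *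
            (TMS.transfer M φ)^[n] (fun _ => (1:ℝ)) (TMS.cons a.1 υ))) :=
        hsL1.mul_left key
      have hsub : Summable (fun a : {a : S // M a (ω 0)} =>
          Real.exp (φ (TMS.cons a.1 ω)) * (TMS.transfer M φ)^[n] f (TMS.cons a.1 ω)
            - Real.exp (φ (TMS.cons a.1 υ)) * (TMS.transfer M φ)^[n] f (TMS.cons a.1 υ)) :=
        hsx.sub hsy
      calc |(∑' a : {a : S // M a (ω 0)},
              Real.exp (φ (TMS.cons a.1 ω)) * (TMS.transfer M φ)^[n] f (TMS.cons a.1 ω))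
            - ∑' a : {a : S // M a (ω 0)},
              Real.exp (φ (TMS.cons a.1 υ)) * (TMS.transfer M φ)^[n] f (TMS.cons a.1 υ)|
          = |∑' a : {a : S // M a (ω 0)},
              (Real.exp (φ (TMS.cons a.1 ω)) * (TMS.transfer M φ)^[n] f (TMS.cons a.1 ω)
                - Real.exp (φ (TMS.cons a.1 υ)) * (TMS.transfer M φ)^[n] f (TMS.cons a.1 υ))| := by
            rw [Summable.tsum_sub hsx hsy]
        _ ≤ ∑' a : {a : S // M a (ω 0)},
              |Real.exp (φ (TMS.cons a.1 ω)) * (TMS.transfer M φ)^[n] f (TMS.cons a.1 ω)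
                - Real.exp (φ (TMS.cons a.1 υ)) * (TMS.transfer M φ)^[n] f (TMS.cons a.1 υ)| :=
            abs_tsum_le (summable_abs_iff.mpr hsub)
        _ ≤ ∑' a : {a : S // M a (ω 0)},
              key * (Real.exp (φ (TMS.cons a.1 υ)) *
                (TMS.transfer M φ)^[n] (fun _ => (1:ℝ)) (TMS.cons a.1 υ)) :=
            Summable.tsum_le_tsum hpt (summable_abs_iff.mpr hsub) hsz
        _ = key * ∑' a : {a : S // M a (ω 0)},
              Real.exp (φ (TMS.cons a.1 υ)) *
                (TMS.transfer M φ)^[n] (fun _ => (1:ℝ)) (TMS.cons a.1 υ) := tsum_mul_left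

end Stmt4Aux4
section Stmt4Aux5

set_option maxHeartbeats 1000000

open TMS

variable {S : Type*} {A M : S → S → Prop} {φ : (ℕ → S) → ℝ} {θ : ℝ} {k : ℕ}

lemma le_supNorm {f : (ℕ → S) → ℝ} {X : Set (ℕ → S)} {ω : ℕ → S}
    (hbdd : BddAbove ((fun ω => |f ω|) '' X)) (hω : ω ∈ X) :
    |f ω| ≤ TMS.supNorm X f :=
  le_csSup hbdd ⟨ω, hω, rfl⟩

lemma supNorm_nonneg {f : (ℕ → S) → ℝ} {X : Set (ℕ → S)}
    (hne : X.Nonempty) (hbdd : BddAbove ((fun ω => |f ω|) '' X)) :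
    0 ≤ TMS.supNorm X f :=
  le_trans (abs_nonneg _) (le_supNorm hbdd hne.choose_spec)

lemma supNorm_le {f : (ℕ → S) → ℝ} {X : Set (ℕ → S)} {c : ℝ}
    (hne : X.Nonempty) (h : ∀ ω ∈ X, |f ω| ≤ c) :
    TMS.supNorm X f ≤ c := by
  apply csSup_le (hne.image _)
  rintro r ⟨ω, hω, rfl⟩
  exact h ω hω

lemma supNorm_one {X : Set (ℕ → S)} (hne : X.Nonempty) :
    TMS.supNorm X (fun _ => (1:ℝ)) = 1 := by
  apply le_antisymm
  · exact supNorm_le hne (fun ω _ => by norm_num)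
  · have : |(fun _ => (1:ℝ)) hne.choose| ≤ TMS.supNorm X (fun _ => (1:ℝ)) :=
      le_supNorm (f := fun _ => (1:ℝ)) ⟨1, by rintro r ⟨ω, _, rfl⟩; simp⟩ hne.choose_spec
    simpa using this

lemma lipSemi_nonneg {f : (ℕ → S) → ℝ} {X : Set (ℕ → S)} :
    0 ≤ TMS.lipSemi X θ k f := by
  rcases Set.eq_empty_or_nonempty {C | 0 ≤ C ∧ TMS.LipBound X θ k f C} with h | h
  · rw [TMS.lipSemi, h, Real.sInf_empty]
  · exact le_csInf h fun C hC => hC.1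

lemma lipSemi_le {f : (ℕ → S) → ℝ} {X : Set (ℕ → S)} {C : ℝ}
    (hC0 : 0 ≤ C) (hC : TMS.LipBound X θ k f C) :
    TMS.lipSemi X θ k f ≤ C :=
  csInf_le ⟨0, fun x hx => hx.1⟩ ⟨hC0, hC⟩

lemma lipBound_mono {f : (ℕ → S) → ℝ} {X : Set (ℕ → S)} {C C' : ℝ} (hθ0 : 0 < θ)
    (hCC : C ≤ C') (h : TMS.LipBound X θ k f C) : TMS.LipBound X θ k f C' := by
  intro n hn ω hω υ hυ hag
  refine le_trans (h n hn ω hω υ hυ hag) ?_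
  exact mul_le_mul_of_nonneg_right hCC (pow_nonneg hθ0.le n)

lemma lipBound_lipSemi {f : (ℕ → S) → ℝ} {X : Set (ℕ → S)} (hθ0 : 0 < θ)
    (hex : ∃ C, TMS.LipBound X θ k f C) :
    TMS.LipBound X θ k f (TMS.lipSemi X θ k f) := by
  obtain ⟨C, hC⟩ := hex
  have hne : {C | 0 ≤ C ∧ TMS.LipBound X θ k f C}.Nonempty :=
    ⟨max C 0, le_max_right _ _, lipBound_mono hθ0 (le_max_left _ _) hC⟩
  intro n hn ω hω υ hυ hag
  rw [TMS.lipSemi, ← div_le_iff₀ (pow_pos hθ0 n)] at *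
  apply le_csInf hne
  intro b hb
  rw [div_le_iff₀ (pow_pos hθ0 n)]
  exact hb.2 n hn ω hω υ hυ hag

lemma lipSemi_one {X : Set (ℕ → S)} (hθ0 : 0 < θ) :
    TMS.lipSemi X θ k (fun _ => (1:ℝ)) = 0 := by
  apply le_antisymm _ lipSemi_nonneg
  apply lipSemi_le le_rfl
  intro n hn ω hω υ hυ hag
  simp [pow_nonneg hθ0.le]

lemma one_mem_Cb [TopologicalSpace S] {X : Set (ℕ → S)} :
    (fun _ => (1:ℝ)) ∈ TMS.Cb X :=
  ⟨continuousOn_const, ⟨1, by rintro r ⟨ω, _, rfl⟩; simp⟩⟩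

lemma one_mem_Fkb [TopologicalSpace S] {X : Set (ℕ → S)} (hθ0 : 0 < θ) :
    (fun _ => (1:ℝ)) ∈ TMS.Fkb X θ k :=
  ⟨one_mem_Cb, 0, by intro n hn ω hω υ hυ hag; simp [pow_nonneg hθ0.le]⟩

end Stmt4Aux5
section Stmt4Aux6

set_option maxHeartbeats 1000000

open TMS

variable {S : Type*} {A M : S → S → Prop} {φ : (ℕ → S) → ℝ}

lemma bddAbove_iter (hMA : ∀ a b, M a b → A a b)
    (hφ : TMS.SummableOn (TMS.markovShift A) φ) {f : (ℕ → S) → ℝ} {c : ℝ} (n : ℕ)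
    (hc : 0 ≤ c) (hb : ∀ ω ∈ TMS.markovShift A, |f ω| ≤ c) :
    BddAbove ((fun ω => |(TMS.transfer M φ)^[n] f ω|) '' (TMS.markovShift A)) := by
  refine ⟨c * (Tc A φ) ^ n, ?_⟩
  rintro r ⟨ω, hω, rfl⟩
  exact iter_abs_bound hMA hφ n hc hb hω

lemma opNorm_Cb_eq [TopologicalSpace S] (hMA : ∀ a b, M a b → A a b)
    (hφ : TMS.SummableOn (TMS.markovShift A) φ)
    (hne : (TMS.markovShift A).Nonempty) (n : ℕ) :
    TMS.opNorm (TMS.supNorm (TMS.markovShift A)) (TMS.Cb (TMS.markovShift A))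
        ((TMS.transfer M φ)^[n])
      = TMS.supNorm (TMS.markovShift A) ((TMS.transfer M φ)^[n] (fun _ => (1:ℝ))) := by
  have hb1 : ∀ ω ∈ TMS.markovShift A, |(fun _ => (1:ℝ)) ω| ≤ 1 := by intro ω _; simp
  have hbdd1 := bddAbove_iter hMA hφ (f := fun _ => (1:ℝ)) n zero_le_one hb1
  set s := TMS.supNorm (TMS.markovShift A) ((TMS.transfer M φ)^[n] (fun _ => (1:ℝ))) with hs
  rw [TMS.opNorm]
  have hub : ∀ r ∈ {r | ∃ f ∈ TMS.Cb (TMS.markovShift A),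
      TMS.supNorm (TMS.markovShift A) f ≤ 1 ∧
        r = TMS.supNorm (TMS.markovShift A) ((TMS.transfer M φ)^[n] f)}, r ≤ s := by
    rintro r ⟨f, hf, hf1, rfl⟩
    have hfb : ∀ ω ∈ TMS.markovShift A, |f ω| ≤ 1 :=
      fun ω hω => le_trans (le_supNorm hf.2 hω) hf1
    apply supNorm_le hne
    intro ω hω
    calc |(TMS.transfer M φ)^[n] f ω|
        ≤ 1 * (TMS.transfer M φ)^[n] (fun _ => (1:ℝ)) ω := iter_dom hMA hφ n zero_le_one hfb hω
      _ = (TMS.transfer M φ)^[n] (fun _ => (1:ℝ)) ω := one_mul _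
      _ ≤ |(TMS.transfer M φ)^[n] (fun _ => (1:ℝ)) ω| := le_abs_self _
      _ ≤ s := le_supNorm hbdd1 hω
  have hmem : s ∈ {r | ∃ f ∈ TMS.Cb (TMS.markovShift A),
      TMS.supNorm (TMS.markovShift A) f ≤ 1 ∧
        r = TMS.supNorm (TMS.markovShift A) ((TMS.transfer M φ)^[n] f)} :=
    ⟨fun _ => (1:ℝ), one_mem_Cb, le_of_eq (supNorm_one hne), rfl⟩
  exact le_antisymm (csSup_le ⟨s, hmem⟩ hub) (le_csSup ⟨s, hub⟩ hmem)

lemma opNorm_Fkb_bounds [TopologicalSpace S] (hMA : ∀ a b, M a b → A a b)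
    (hφ : TMS.SummableOn (TMS.markovShift A) φ) {θ B : ℝ} {k : ℕ}
    (hθ0 : 0 < θ) (hθ1 : θ < 1) (hk : 1 ≤ k)
    (hB : TMS.LipBound (TMS.markovShift A) θ (k + 1) φ B) (hB0 : 0 ≤ B)
    (hne : (TMS.markovShift A).Nonempty) (n : ℕ) :
    TMS.supNorm (TMS.markovShift A) ((TMS.transfer M φ)^[n] (fun _ => (1:ℝ)))
      ≤ TMS.opNorm (TMS.normK (TMS.markovShift A) θ k) (TMS.Fkb (TMS.markovShift A) θ k)
          ((TMS.transfer M φ)^[n]) ∧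
    TMS.opNorm (TMS.normK (TMS.markovShift A) θ k) (TMS.Fkb (TMS.markovShift A) θ k)
        ((TMS.transfer M φ)^[n])
      ≤ (1 + Real.exp (B * (θ / (1 - θ)))
          + B * θ / (1 - θ) * Real.exp (B * (θ / (1 - θ)))) *
        TMS.supNorm (TMS.markovShift A) ((TMS.transfer M φ)^[n] (fun _ => (1:ℝ))) := by
  have hpos : (0:ℝ) < 1 - θ := by linarith
  set E := Real.exp (B * (θ / (1 - θ))) with hE
  have hE1 : 1 ≤ E := Real.one_le_exp (by positivity)
  have hE0 : 0 < E := Real.exp_pos _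
  have hW0 : 0 ≤ B * θ / (1 - θ) := by positivity
  have hb1 : ∀ ω ∈ TMS.markovShift A, |(fun _ => (1:ℝ)) ω| ≤ 1 := by intro ω _; simp
  have hbdd1 := bddAbove_iter hMA hφ (f := fun _ => (1:ℝ)) n zero_le_one hb1
  set s := TMS.supNorm (TMS.markovShift A) ((TMS.transfer M φ)^[n] (fun _ => (1:ℝ))) with hs
  have hs0 : 0 ≤ s := supNorm_nonneg hne hbdd1
  set c₀ := 1 + E + B * θ / (1 - θ) * E with hc₀
  -- upper bound for every element of the set
  have hub : ∀ r ∈ {r | ∃ f ∈ TMS.Fkb (TMS.markovShift A) θ k,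
      TMS.normK (TMS.markovShift A) θ k f ≤ 1 ∧
        r = TMS.normK (TMS.markovShift A) θ k ((TMS.transfer M φ)^[n] f)},
      r ≤ c₀ * s := by
    rintro r ⟨f, hf, hf1, rfl⟩
    obtain ⟨⟨hcont, hbddf⟩, hexC⟩ := hf
    set c := TMS.supNorm (TMS.markovShift A) f with hcd
    set Kf := TMS.lipSemi (TMS.markovShift A) θ k f with hKfd
    have hc0 : 0 ≤ c := supNorm_nonneg hne hbddf
    have hKf0 : 0 ≤ Kf := lipSemi_nonneg
    have hsum : c + Kf ≤ 1 := hf1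
    have hc1 : c ≤ 1 := by linarith
    have hKf1 : Kf ≤ 1 := by linarith
    have hfb : ∀ ω ∈ TMS.markovShift A, |f ω| ≤ c := fun ω hω => le_supNorm hbddf hω
    have hfK : TMS.LipBound (TMS.markovShift A) θ k f Kf := lipBound_lipSemi hθ0 hexC
    have hL1s : ∀ υ ∈ TMS.markovShift A,
        (TMS.transfer M φ)^[n] (fun _ => (1:ℝ)) υ ≤ s :=
      fun υ hυ => le_trans (le_abs_self _) (le_supNorm hbdd1 hυ)
    have h1 : TMS.supNorm (TMS.markovShift A) ((TMS.transfer M φ)^[n] f) ≤ c * s := by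
      apply supNorm_le hne
      intro ω hω
      refine le_trans (iter_dom hMA hφ n hc0 hfb hω) ?_
      exact mul_le_mul_of_nonneg_left (hL1s ω hω) hc0
    have hK' : TMS.LipBound (TMS.markovShift A) θ k ((TMS.transfer M φ)^[n] f)
        ((Kf * θ ^ n * E + c * (B * θ / (1 - θ) * E)) * s) := by
      intro m hm ω hω υ hυ hag
      refine le_trans (core hMA hφ hθ0 hθ1 hk hB hB0 n f Kf c hKf0 hc0 hfK hfb
        m hm ω hω υ hυ hag) ?_
      have hDcE : Dc θ B m n ≤ E := Dc_le hB0 hθ0 hθ1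
      have hDc1 : 1 ≤ Dc θ B m n := Dc_one_le hB0 hθ0.le
      have hDcs : Dc θ B m n - 1 ≤ θ ^ m * (B * θ / (1 - θ) * E) :=
        Dc_sub_one_le hB0 hθ0 hθ1
      have hθm0 : (0:ℝ) ≤ θ ^ m := pow_nonneg hθ0.le m
      have hθn0 : (0:ℝ) ≤ θ ^ n := pow_nonneg hθ0.le n
      have hL1 : (TMS.transfer M φ)^[n] (fun _ => (1:ℝ)) υ ≤ s := hL1s υ hυ
      have hL10 : 0 ≤ (TMS.transfer M φ)^[n] (fun _ => (1:ℝ)) υ :=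
        (iter_one_bound hMA hφ n hυ).1
      have hcoef0 : 0 ≤ Kf * θ ^ (m + n) * Dc θ B m n + c * (Dc θ B m n - 1) := by
        have := pow_nonneg hθ0.le (m + n)
        have h1' : 0 ≤ Kf * θ ^ (m + n) * Dc θ B m n :=
          mul_nonneg (mul_nonneg hKf0 this) (le_trans zero_le_one hDc1)
        have h2' : 0 ≤ c * (Dc θ B m n - 1) := mul_nonneg hc0 (by linarith)
        linarith
      have t1 : Kf * θ ^ (m + n) * Dc θ B m n ≤ θ ^ m * (Kf * θ ^ n * E) := by
        rw [pow_add]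
        calc Kf * (θ ^ m * θ ^ n) * Dc θ B m n
            ≤ Kf * (θ ^ m * θ ^ n) * E :=
              mul_le_mul_of_nonneg_left hDcE
                (mul_nonneg hKf0 (mul_nonneg hθm0 hθn0))
          _ = θ ^ m * (Kf * θ ^ n * E) := by ring
      have t2 : c * (Dc θ B m n - 1) ≤ θ ^ m * (c * (B * θ / (1 - θ) * E)) := by
        calc c * (Dc θ B m n - 1) ≤ c * (θ ^ m * (B * θ / (1 - θ) * E)) :=
              mul_le_mul_of_nonneg_left hDcs hc0
          _ = θ ^ m * (c * (B * θ / (1 - θ) * E)) := by ring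
      calc (Kf * θ ^ (m + n) * Dc θ B m n + c * (Dc θ B m n - 1)) *
              (TMS.transfer M φ)^[n] (fun _ => (1:ℝ)) υ
          ≤ (Kf * θ ^ (m + n) * Dc θ B m n + c * (Dc θ B m n - 1)) * s :=
            mul_le_mul_of_nonneg_left hL1 hcoef0
        _ ≤ (θ ^ m * (Kf * θ ^ n * E + c * (B * θ / (1 - θ) * E))) * s := by
            apply mul_le_mul_of_nonneg_right _ hs0
            calc Kf * θ ^ (m + n) * Dc θ B m n + c * (Dc θ B m n - 1)
                ≤ θ ^ m * (Kf * θ ^ n * E) + θ ^ m * (c * (B * θ / (1 - θ) * E)) :=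
                  add_le_add t1 t2
              _ = θ ^ m * (Kf * θ ^ n * E + c * (B * θ / (1 - θ) * E)) := by ring
        _ = (Kf * θ ^ n * E + c * (B * θ / (1 - θ) * E)) * s * θ ^ m := by ring
    have hcoef0' : 0 ≤ (Kf * θ ^ n * E + c * (B * θ / (1 - θ) * E)) * s := by
      have hθn0 : (0:ℝ) ≤ θ ^ n := pow_nonneg hθ0.le n
      have : 0 ≤ Kf * θ ^ n * E := mul_nonneg (mul_nonneg hKf0 hθn0) hE0.le
      have : 0 ≤ c * (B * θ / (1 - θ) * E) := mul_nonneg hc0 (mul_nonneg hW0 hE0.le)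
      positivity
    have h2 : TMS.lipSemi (TMS.markovShift A) θ k ((TMS.transfer M φ)^[n] f)
        ≤ (Kf * θ ^ n * E + c * (B * θ / (1 - θ) * E)) * s :=
      lipSemi_le hcoef0' hK'
    rw [TMS.normK]
    have hθn1 : θ ^ n ≤ 1 := pow_le_one₀ hθ0.le hθ1.le
    have hθn0 : (0:ℝ) ≤ θ ^ n := pow_nonneg hθ0.le n
    have i1 : Kf * θ ^ n * E ≤ E := by
      calc Kf * θ ^ n * E = Kf * (θ ^ n * E) := by ring
        _ ≤ 1 * (θ ^ n * E) :=
          mul_le_mul_of_nonneg_right hKf1 (mul_nonneg hθn0 hE0.le)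
        _ = θ ^ n * E := one_mul _
        _ ≤ 1 * E := mul_le_mul_of_nonneg_right hθn1 hE0.le
        _ = E := one_mul _
    have i2 : c * (B * θ / (1 - θ) * E) ≤ B * θ / (1 - θ) * E := by
      calc c * (B * θ / (1 - θ) * E) ≤ 1 * (B * θ / (1 - θ) * E) :=
            mul_le_mul_of_nonneg_right hc1 (mul_nonneg hW0 hE0.le)
        _ = B * θ / (1 - θ) * E := one_mul _
    have hcs : c * s ≤ 1 * s := mul_le_mul_of_nonneg_right hc1 hs0
    have hco : (Kf * θ ^ n * E + c * (B * θ / (1 - θ) * E)) * s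
        ≤ (E + B * θ / (1 - θ) * E) * s :=
      mul_le_mul_of_nonneg_right (by linarith) hs0
    calc TMS.supNorm (TMS.markovShift A) ((TMS.transfer M φ)^[n] f) +
          TMS.lipSemi (TMS.markovShift A) θ k ((TMS.transfer M φ)^[n] f)
        ≤ c * s + (Kf * θ ^ n * E + c * (B * θ / (1 - θ) * E)) * s := add_le_add h1 h2
      _ ≤ 1 * s + (E + B * θ / (1 - θ) * E) * s := add_le_add hcs hco
      _ = c₀ * s := by rw [hc₀]; ring
  have hmem : TMS.normK (TMS.markovShift A) θ k
      ((TMS.transfer M φ)^[n] (fun _ => (1:ℝ))) ∈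
      {r | ∃ f ∈ TMS.Fkb (TMS.markovShift A) θ k,
        TMS.normK (TMS.markovShift A) θ k f ≤ 1 ∧
          r = TMS.normK (TMS.markovShift A) θ k ((TMS.transfer M φ)^[n] f)} := by
    refine ⟨fun _ => (1:ℝ), one_mem_Fkb hθ0, ?_, rfl⟩
    rw [TMS.normK, supNorm_one hne, lipSemi_one hθ0]
    norm_num
  constructor
  · have hlow : s ≤ TMS.normK (TMS.markovShift A) θ k
        ((TMS.transfer M φ)^[n] (fun _ => (1:ℝ))) := by
      rw [TMS.normK]
      have := lipSemi_nonneg (f := (TMS.transfer M φ)^[n] (fun _ => (1:ℝ)))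
        (X := TMS.markovShift A) (θ := θ) (k := k)
      linarith
    exact le_trans hlow (le_csSup ⟨c₀ * s, hub⟩ hmem)
  · exact csSup_le ⟨_, hmem⟩ hub

end Stmt4Aux6
set_option maxHeartbeats 1000000 in
/-- under (A.1) and (A.3) the spectral radius of `L_M` on `F^k_b(X)`
equals its spectral radius on `C_b(X)`. -/
theorem stmt4 {S : Type*} [Countable S] [TopologicalSpace S] [DiscreteTopology S]
    (A M : S → S → Prop) (hMA : ∀ a b, M a b → A a b)
    (hA : TMS.FinitelyIrreducible A)
    (θ : ℝ) (hθ0 : 0 < θ) (hθ1 : θ < 1) (k : ℕ) (hk : 1 ≤ k)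
    (φ : (ℕ → S) → ℝ) (hφ : TMS.SummableOn (TMS.markovShift A) φ)
    (hφlip : ∃ C, TMS.LipBound (TMS.markovShift A) θ (k + 1) φ C) :
    TMS.specRad (TMS.normK (TMS.markovShift A) θ k) (TMS.Fkb (TMS.markovShift A) θ k)
        (TMS.transfer M φ) =
      TMS.specRad (TMS.supNorm (TMS.markovShift A)) (TMS.Cb (TMS.markovShift A))
        (TMS.transfer M φ) := by
  obtain ⟨C0, hC0⟩ := hφlip
  rcases Set.eq_empty_or_nonempty (TMS.markovShift A) with hX | hne
  · -- the degenerate case `X = ∅`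
    have hsup : ∀ f : (ℕ → S) → ℝ, TMS.supNorm (TMS.markovShift A) f = 0 := by
      intro f
      rw [TMS.supNorm, hX, Set.image_empty, Real.sSup_empty]
    have hLB : ∀ (g : (ℕ → S) → ℝ) (C : ℝ), TMS.LipBound (TMS.markovShift A) θ k g C := by
      intro g C n hn ω hω
      rw [hX] at hω
      exact absurd hω (Set.notMem_empty ω)
    have hlip0 : ∀ f : (ℕ → S) → ℝ, TMS.lipSemi (TMS.markovShift A) θ k f = 0 := by
      intro f
      rw [TMS.lipSemi]
      have hset : {C | 0 ≤ C ∧ TMS.LipBound (TMS.markovShift A) θ k f C} = Set.Ici 0 := by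
        ext C
        simp [hLB, Set.mem_Ici]
      rw [hset, csInf_Ici]
    have hnormK0 : ∀ f : (ℕ → S) → ℝ, TMS.normK (TMS.markovShift A) θ k f = 0 := by
      intro f
      rw [TMS.normK, hsup, hlip0, add_zero]
    have hCb0 : ∀ n : ℕ, TMS.opNorm (TMS.supNorm (TMS.markovShift A))
        (TMS.Cb (TMS.markovShift A)) ((TMS.transfer M φ)^[n]) = 0 := by
      intro n
      rw [TMS.opNorm]
      have hset : {r | ∃ f ∈ TMS.Cb (TMS.markovShift A),
          TMS.supNorm (TMS.markovShift A) f ≤ 1 ∧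
            r = TMS.supNorm (TMS.markovShift A) ((TMS.transfer M φ)^[n] f)} = {0} := by
        ext r
        constructor
        · rintro ⟨f, hf, h1, rfl⟩
          simp [hsup]
        · intro hr
          rw [Set.mem_singleton_iff] at hr
          subst hr
          exact ⟨fun _ => (1:ℝ), one_mem_Cb, by rw [hsup]; norm_num, (hsup _).symm⟩
      rw [hset, csSup_singleton]
    have hFkb0 : ∀ n : ℕ, TMS.opNorm (TMS.normK (TMS.markovShift A) θ k)
        (TMS.Fkb (TMS.markovShift A) θ k) ((TMS.transfer M φ)^[n]) = 0 := by
      intro n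
      rw [TMS.opNorm]
      have hset : {r | ∃ f ∈ TMS.Fkb (TMS.markovShift A) θ k,
          TMS.normK (TMS.markovShift A) θ k f ≤ 1 ∧
            r = TMS.normK (TMS.markovShift A) θ k ((TMS.transfer M φ)^[n] f)} = {0} := by
        ext r
        constructor
        · rintro ⟨f, hf, h1, rfl⟩
          simp [hnormK0]
        · intro hr
          rw [Set.mem_singleton_iff] at hr
          subst hr
          exact ⟨fun _ => (1:ℝ), ⟨one_mem_Cb, 0, hLB _ 0⟩,
            by rw [hnormK0]; norm_num, (hnormK0 _).symm⟩
      rw [hset, csSup_singleton]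
    rw [TMS.specRad, TMS.specRad]
    congr 1
    funext n
    rw [hFkb0 n, hCb0 n]
  · -- the main case `X ≠ ∅`
    set B := max C0 0 with hBdef
    have hB0 : 0 ≤ B := le_max_right _ _
    have hB : TMS.LipBound (TMS.markovShift A) θ (k + 1) φ B :=
      lipBound_mono hθ0 (le_max_left _ _) hC0
    have hpos : (0:ℝ) < 1 - θ := by linarith
    set E := Real.exp (B * (θ / (1 - θ))) with hEdef
    have hE1 : 1 ≤ E := Real.one_le_exp (by positivity)
    have hE0 : 0 < E := Real.exp_pos _
    have hW0 : 0 ≤ B * θ / (1 - θ) := by positivity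
    set c₀ : ℝ := 1 + E + B * θ / (1 - θ) * E with hc₀def
    have hWE0 : 0 ≤ B * θ / (1 - θ) * E := mul_nonneg hW0 hE0.le
    have hc₀1 : 1 ≤ c₀ := by rw [hc₀def]; linarith
    have hc₀0 : 0 < c₀ := by linarith
    set sf : ℕ → ℝ := fun n => TMS.supNorm (TMS.markovShift A)
      ((TMS.transfer M φ)^[n] (fun _ => (1:ℝ))) with hsfdef
    have hb1 : ∀ ω ∈ TMS.markovShift A, |(fun _ => (1:ℝ)) ω| ≤ 1 := by intro ω _; simp
    have hs0 : ∀ n, 0 ≤ sf n := fun n =>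
      supNorm_nonneg hne (bddAbove_iter hMA hφ n zero_le_one hb1)
    set τ : ℝ := max 1 (Tc A φ) with hτdef
    have hτ1 : 1 ≤ τ := le_max_left _ _
    have hτ0 : (0:ℝ) ≤ τ := by linarith
    have hsτ : ∀ n, sf n ≤ τ ^ n := by
      intro n
      have h1 : sf n ≤ 1 * (Tc A φ) ^ n :=
        supNorm_le hne (fun ω hω => iter_abs_bound hMA hφ n zero_le_one hb1 hω)
      calc sf n ≤ 1 * (Tc A φ) ^ n := h1
        _ = (Tc A φ) ^ n := one_mul _
        _ ≤ τ ^ n := pow_le_pow_left₀ Tc_nonneg (le_max_right _ _) n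
    have hvlow : ∀ n, sf n ≤ TMS.opNorm (TMS.normK (TMS.markovShift A) θ k)
        (TMS.Fkb (TMS.markovShift A) θ k) ((TMS.transfer M φ)^[n]) :=
      fun n => (opNorm_Fkb_bounds hMA hφ hθ0 hθ1 hk hB hB0 hne n).1
    have hvhigh : ∀ n, TMS.opNorm (TMS.normK (TMS.markovShift A) θ k)
        (TMS.Fkb (TMS.markovShift A) θ k) ((TMS.transfer M φ)^[n]) ≤ c₀ * sf n :=
      fun n => (opNorm_Fkb_bounds hMA hφ hθ0 hθ1 hk hB hB0 hne n).2
    have hu : ∀ n, TMS.opNorm (TMS.supNorm (TMS.markovShift A))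
        (TMS.Cb (TMS.markovShift A)) ((TMS.transfer M φ)^[n]) = sf n :=
      fun n => opNorm_Cb_eq hMA hφ hne n
    rw [TMS.specRad, TMS.specRad]
    set F : ℕ → ℝ := fun n => (TMS.opNorm (TMS.normK (TMS.markovShift A) θ k)
      (TMS.Fkb (TMS.markovShift A) θ k) ((TMS.transfer M φ)^[n])) ^ ((1:ℝ)/n) with hFdef
    set G : ℕ → ℝ := fun n => (TMS.opNorm (TMS.supNorm (TMS.markovShift A))
      (TMS.Cb (TMS.markovShift A)) ((TMS.transfer M φ)^[n])) ^ ((1:ℝ)/n) with hGdef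
    have hGn : ∀ n, G n = (sf n) ^ ((1:ℝ)/n) := by
      intro n
      rw [hGdef]
      simp only [hu n]
    have hopF0 : ∀ n, 0 ≤ TMS.opNorm (TMS.normK (TMS.markovShift A) θ k)
        (TMS.Fkb (TMS.markovShift A) θ k) ((TMS.transfer M φ)^[n]) :=
      fun n => le_trans (hs0 n) (hvlow n)
    have hG0 : ∀ n, 0 ≤ G n := fun n => by rw [hGn n]; exact Real.rpow_nonneg (hs0 n) _
    have hF0 : ∀ n, 0 ≤ F n := fun n => Real.rpow_nonneg (hopF0 n) _
    have hpow : ∀ n : ℕ, 1 ≤ n → ((τ:ℝ) ^ n) ^ ((1:ℝ)/n) = τ := by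
      intro n hn
      have hn0 : (n:ℝ) ≠ 0 := Nat.cast_ne_zero.2 (by omega)
      rw [← Real.rpow_natCast τ n, ← Real.rpow_mul hτ0, mul_one_div, div_self hn0,
        Real.rpow_one]
    have hGτ : ∀ n, 1 ≤ n → G n ≤ τ := by
      intro n hn
      rw [hGn n, ← hpow n hn]
      exact Real.rpow_le_rpow (hs0 n) (hsτ n) (by positivity)
    have hGF : ∀ n, G n ≤ F n := by
      intro n
      rw [hGn n, hFdef]
      exact Real.rpow_le_rpow (hs0 n) (hvlow n) (by positivity)
    have hFG : ∀ n, F n ≤ c₀ ^ ((1:ℝ)/n) * G n := by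
      intro n
      have h1 : F n ≤ (c₀ * sf n) ^ ((1:ℝ)/n) := by
        rw [hFdef]
        exact Real.rpow_le_rpow (hopF0 n) (hvhigh n) (by positivity)
      refine le_trans h1 (le_of_eq ?_)
      rw [Real.mul_rpow hc₀0.le (hs0 n), hGn n]
    have hcexp : ∀ n : ℕ, c₀ ^ ((1:ℝ)/n) ≤ c₀ := by
      intro n
      rcases Nat.eq_zero_or_pos n with h | h
      · subst h; simpa using hc₀1
      · calc c₀ ^ ((1:ℝ)/n) ≤ c₀ ^ (1:ℝ) := by
              apply Real.rpow_le_rpow_of_exponent_le hc₀1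
              rw [div_le_one (by exact_mod_cast h)]
              exact_mod_cast h
          _ = c₀ := Real.rpow_one c₀
    have hFb : Filter.IsBoundedUnder (· ≤ ·) Filter.atTop F := by
      apply Filter.isBoundedUnder_of_eventually_le (a := c₀ * τ)
      filter_upwards [Filter.eventually_ge_atTop 1] with n hn
      calc F n ≤ c₀ ^ ((1:ℝ)/n) * G n := hFG n
        _ ≤ c₀ * τ := mul_le_mul (hcexp n) (hGτ n hn) (hG0 n) hc₀0.le
    have hGb : Filter.IsBoundedUnder (· ≤ ·) Filter.atTop G := by
      apply Filter.isBoundedUnder_of_eventually_le (a := τ)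
      filter_upwards [Filter.eventually_ge_atTop 1] with n hn
      exact hGτ n hn
    have hGcob : Filter.IsCoboundedUnder (· ≤ ·) Filter.atTop G :=
      Filter.isCoboundedUnder_le_of_le Filter.atTop (x := 0) hG0
    have hFcob : Filter.IsCoboundedUnder (· ≤ ·) Filter.atTop F :=
      Filter.isCoboundedUnder_le_of_le Filter.atTop (x := 0) hF0
    apply le_antisymm
    · -- limsup F ≤ limsup G
      by_contra hgt
      push_neg at hgt
      set LG := Filter.limsup G Filter.atTop with hLGdef
      set LF := Filter.limsup F Filter.atTop with hLFdef
      have hLG0 : 0 ≤ LG := Filter.le_limsup_of_frequently_le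
        ((Filter.Eventually.of_forall hG0).frequently) hGb
      set t := (LG + LF)/2 with htdef
      have ht1 : LG < t := by rw [htdef]; linarith
      have ht2 : t < LF := by rw [htdef]; linarith
      have ht0 : 0 < t := by linarith
      set b := (t + LF)/2 with hbdef
      have hb1' : t < b := by rw [hbdef]; linarith
      have hb2 : b < LF := by rw [hbdef]; linarith
      set ρ := b / t with hρdef
      have hρ1 : 1 < ρ := (one_lt_div ht0).2 hb1'
      have hc₀t : Filter.Tendsto (fun n : ℕ => c₀ ^ ((1:ℝ)/n)) Filter.atTop (nhds 1) := by
        have h1 : (fun n : ℕ => c₀ ^ ((1:ℝ)/n))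
            = fun n : ℕ => Real.exp (Real.log c₀ * (1/(n:ℝ))) := by
          funext n
          rw [Real.rpow_def_of_pos hc₀0]
        rw [h1]
        have h2 : Filter.Tendsto (fun n : ℕ => Real.log c₀ * (1/(n:ℝ)))
            Filter.atTop (nhds 0) := by
          have := tendsto_one_div_atTop_nhds_zero_nat.const_mul (Real.log c₀)
          simpa using this
        have h3 := (Real.continuous_exp.tendsto 0).comp h2
        simpa [Function.comp_def] using h3
      have hρe := hc₀t.eventually_lt_const hρ1
      have hGe : ∀ᶠ n in Filter.atTop, G n < t :=
        Filter.eventually_lt_of_limsup_lt ht1 hGb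
      have hFe : ∀ᶠ n in Filter.atTop, F n ≤ b := by
        filter_upwards [hρe, hGe] with n h1 h2
        calc F n ≤ c₀ ^ ((1:ℝ)/n) * G n := hFG n
          _ ≤ c₀ ^ ((1:ℝ)/n) * t := by
              apply mul_le_mul_of_nonneg_left h2.le (Real.rpow_nonneg hc₀0.le _)
          _ ≤ ρ * t := mul_le_mul_of_nonneg_right h1.le ht0.le
          _ = b := by rw [hρdef]; field_simp
      have : LF ≤ b := Filter.limsup_le_of_le hFcob hFe
      linarith
    · -- limsup G ≤ limsup F
      exact Filter.limsup_le_limsup (Filter.Eventually.of_forall hGF) hGcob hFb
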